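/- For every integer k ≥ 0 and all real numbers x_0 < x_1 < ⋯ < x_k and y_0 < y_1 < ⋯ < y_k, det((p_1(x_i, y_j))_{i,j=0}^{k}) ≤ ∏_{i=0}^{k} (2π)^{−1/2} e^{−(x_i − y_i)²/2}; in particular this determinant is at most 1. -/

import Mathlib

open Real Finset Matrix Filter Topology

noncomputable def Kmat {n : ℕ} (x y : Fin n → ℝ) : Matrix (Fin n) (Fin n) ℝ :=
  Matrix.of fun i j => Real.exp (x i * y j)

lemma expPoly_eq_zero : ∀ (m : ℕ) (y : Fin m → ℝ), StrictMono y →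
    ∀ (c : Fin m → ℝ) (s : Fin m → ℝ), StrictMono s →
    (∀ i, ∑ j, c j * Real.exp (s i * y j) = 0) → ∀ j, c j = 0 := by
  intro m
  induction m with
  | zero => intro _ _ _ _ _ _ j; exact j.elim0
  | succ m IH =>
    intro y hy c s hs hzero
    set z : Fin (m + 1) → ℝ := fun j => y j - y 0 with hz
    set g : ℝ → ℝ := fun t => ∑ j, c j * Real.exp (t * z j) with hgdef
    have hgderiv : ∀ t : ℝ, HasDerivAt g (∑ j, c j * z j * Real.exp (t * z j)) t := by
      intro t
      apply HasDerivAt.fun_sum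
      intro j _
      have h1 : HasDerivAt (fun t : ℝ => t * z j) (z j) t := hasDerivAt_mul_const (z j)
      have h2 := (h1.exp).const_mul (c j)
      convert h2 using 1
      · rfl
      ring
    have hgcont : Continuous g := by
      apply continuous_finset_sum
      intro j _
      fun_prop
    have hgzero : ∀ i, g (s i) = 0 := by
      intro i
      have : g (s i) = (∑ j, c j * Real.exp (s i * y j)) * Real.exp (-(s i * y 0)) := by
        rw [Finset.sum_mul]
        apply Finset.sum_congr rfl
        intro j _
        rw [mul_assoc, ← Real.exp_add, hz]
        ring_nf
      rw [this, hzero i, zero_mul]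
    -- Rolle between consecutive points
    have hroll : ∀ i : Fin m, ∃ t ∈ Set.Ioo (s i.castSucc) (s i.succ),
        (∑ j, c j * z j * Real.exp (t * z j)) = 0 := by
      intro i
      exact exists_hasDerivAt_eq_zero (hs (Fin.castSucc_lt_succ : i.castSucc < i.succ))
        hgcont.continuousOn (by rw [hgzero, hgzero])
        (fun t _ => hgderiv t)
    choose t ht hteq using hroll
    have hts : StrictMono t := by
      intro a b hab
      calc t a < s a.succ := (ht a).2
        _ ≤ s b.castSucc := hs.monotone (by
            simp only [Fin.le_def, Fin.val_succ, Fin.coe_castSucc]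
            omega)
        _ < t b := (ht b).1
    have hcsucc : ∀ j : Fin m, c j.succ = 0 := by
      have := IH (fun j => z j.succ)
        (fun a b hab => by
          simp only [hz]
          exact sub_lt_sub_right (hy (Fin.succ_lt_succ_iff.mpr hab)) _)
        (fun j => c j.succ * z j.succ) t hts
        (fun i => by
          have h := hteq i
          rw [Fin.sum_univ_succ] at h
          have hz0 : z (0 : Fin (m+1)) = 0 := sub_self _
          rw [hz0, mul_zero, zero_mul, zero_add] at h
          rw [← h])
      intro j
      have hj := this j
      have hzne : z j.succ ≠ 0 := by
        have : y 0 < y j.succ := hy (Fin.succ_pos j)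
        simp only [hz]
        linarith
      rcases mul_eq_zero.mp hj with h | h
      · exact h
      · exact absurd h hzne
    have hc0 : c 0 = 0 := by
      have h := hzero 0
      rw [Fin.sum_univ_succ] at h
      have : ∀ j : Fin m, c j.succ * Real.exp (s 0 * y j.succ) = 0 := by
        intro j; rw [hcsucc j, zero_mul]
      rw [Finset.sum_congr rfl (fun j _ => this j), Finset.sum_const, smul_zero, add_zero] at h
      exact (mul_eq_zero.mp h).resolve_right (Real.exp_ne_zero _)
    intro j
    cases j using Fin.cases with
    | zero => exact hc0
    | succ j => exact hcsucc j

lemma detK_pos : ∀ (n : ℕ) (x y : Fin n → ℝ), StrictMono x → StrictMono y →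
    0 < (Kmat x y).det := by
  intro n
  induction n with
  | zero => intro x y _ _; simp [Matrix.det_isEmpty]
  | succ n IH =>
    intro x y hx hy
    set c : Fin (n + 1) → ℝ := fun j =>
      (-1 : ℝ) ^ ((n : ℕ) + (j : ℕ)) * (Kmat (x ∘ Fin.castSucc) (y ∘ j.succAbove)).det with hc
    set F : ℝ → ℝ := fun s => ∑ j, c j * Real.exp (s * y j) with hF
    -- determinant of the matrix with last row replaced by exp (s * y j)
    have hdet : ∀ s : ℝ, (Kmat (Function.update x (Fin.last n) s) y).det = F s := by
      intro s
      rw [Matrix.det_succ_row (Kmat (Function.update x (Fin.last n) s) y) (Fin.last n)]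
      apply Finset.sum_congr rfl
      intro j _
      have hsub : (Kmat (Function.update x (Fin.last n) s) y).submatrix
          (Fin.last n).succAbove j.succAbove = Kmat (x ∘ Fin.castSucc) (y ∘ j.succAbove) := by
        rw [Fin.succAbove_last]
        ext a b
        simp only [Matrix.submatrix_apply, Kmat, Matrix.of_apply, Function.comp]
        rw [Function.update_of_ne (Fin.castSucc_lt_last a).ne]
      rw [hsub]
      simp only [Kmat, Matrix.of_apply, Function.update_self, hc, Fin.val_last]
      ring
    have hzeros : ∀ i : Fin n, F (x (Fin.castSucc i)) = 0 := by
      intro i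
      rw [← hdet]
      apply Matrix.det_zero_of_row_eq (Fin.castSucc_lt_last i).ne
      ext b
      simp only [Kmat, Matrix.of_apply]
      rw [Function.update_of_ne (Fin.castSucc_lt_last i).ne, Function.update_self]
    have hclast : 0 < c (Fin.last n) := by
      rw [hc]
      simp only [Fin.succAbove_last, Fin.val_last]
      rw [show ((-1 : ℝ) ^ (n + n)) = 1 from (Even.neg_one_pow ⟨n, rfl⟩), one_mul]
      exact IH _ _ (hx.comp Fin.strictMono_castSucc) (hy.comp Fin.strictMono_castSucc)
    have hcont : Continuous F := by
      apply continuous_finset_sum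
      intro j _
      fun_prop
    -- limit of F s * exp (-(s * y last)) at top is c last
    have hlim : Tendsto (fun s => F s * Real.exp (-(s * y (Fin.last n)))) atTop
        (𝓝 (c (Fin.last n))) := by
      have heq : ∀ s, F s * Real.exp (-(s * y (Fin.last n))) =
          ∑ j, c j * Real.exp (s * (y j - y (Fin.last n))) := by
        intro s
        rw [hF, Finset.sum_mul]
        apply Finset.sum_congr rfl
        intro j _
        rw [mul_assoc, ← Real.exp_add]
        ring_nf
      rw [show c (Fin.last n) = ∑ j, if j = Fin.last n then c j else 0 by
        rw [Finset.sum_ite_eq' Finset.univ (Fin.last n) c]; simp]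
      simp only [funext heq]
      apply tendsto_finset_sum
      intro j _
      by_cases hj : j = Fin.last n
      · subst hj
        simp only [sub_self, mul_zero, Real.exp_zero, mul_one, if_true]
        exact tendsto_const_nhds
      · simp only [hj, if_false]
        rw [show (0 : ℝ) = c j * 0 by ring]
        apply Tendsto.const_mul
        apply Real.tendsto_exp_atBot.comp
        have hneg : y j - y (Fin.last n) < 0 := by
          have : y j < y (Fin.last n) := hy (lt_of_le_of_ne (Fin.le_last j) hj)
          linarith
        exact Tendsto.atTop_mul_const_of_neg hneg (f := fun s:ℝ => s) tendsto_id
    -- get a point beyond x last where F is positive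
    obtain ⟨s0, hs0gt, hs0pos⟩ : ∃ s0, x (Fin.last n) < s0 ∧ 0 < F s0 := by
      have h1 : ∀ᶠ s in atTop, 0 < F s * Real.exp (-(s * y (Fin.last n))) :=
        hlim.eventually (eventually_gt_nhds hclast)
      have h2 : ∀ᶠ s in atTop, x (Fin.last n) < s := eventually_gt_atTop _
      obtain ⟨s0, hpos, hgt⟩ := (h1.and h2).exists
      refine ⟨s0, hgt, ?_⟩
      nlinarith [Real.exp_pos (-(s0 * y (Fin.last n))), hpos]
    -- conclude
    have hgoal : 0 < F (x (Fin.last n)) := by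
      by_contra hle
      push_neg at hle
      obtain ⟨z, hzmem, hz⟩ : ∃ z ∈ Set.Icc (x (Fin.last n)) s0, F z = 0 := by
        have := intermediate_value_Icc hs0gt.le hcont.continuousOn
        have h0 : (0 : ℝ) ∈ Set.Icc (F (x (Fin.last n))) (F s0) := ⟨hle, hs0pos.le⟩
        obtain ⟨z, hz1, hz2⟩ := this h0
        exact ⟨z, hz1, hz2⟩
      set S : Fin (n + 1) → ℝ := Function.update x (Fin.last n) z with hS
      have hSm : StrictMono S := by
        intro a b hab
        by_cases hb : b = Fin.last n
        · subst hb
          have ha : a ≠ Fin.last n := hab.ne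
          rw [hS, Function.update_of_ne ha, Function.update_self]
          calc x a < x (Fin.last n) := hx (lt_of_le_of_ne (Fin.le_last a) ha)
            _ ≤ z := hzmem.1
        · have ha : a ≠ Fin.last n :=
            (hab.trans (lt_of_le_of_ne (Fin.le_last b) hb)).ne
          rw [hS, Function.update_of_ne ha, Function.update_of_ne hb]
          exact hx hab
      have hSzero : ∀ i, ∑ j, c j * Real.exp (S i * y j) = 0 := by
        intro i
        by_cases hi : i = Fin.last n
        · subst hi
          rw [hS]
          show F (Function.update x (Fin.last n) z (Fin.last n)) = 0
          rw [Function.update_self]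
          exact hz
        · have : S i = x i := Function.update_of_ne hi _ _
          rw [this]
          have hi' : ∃ i' : Fin n, Fin.castSucc i' = i := by
            exact ⟨⟨i, lt_of_le_of_ne (Nat.lt_succ_iff.mp i.isLt) (fun h => hi (Fin.ext h))⟩,
              rfl⟩
          obtain ⟨i', rfl⟩ := hi'
          exact hzeros i'
      have := expPoly_eq_zero (n+1) y hy c S hSm hSzero (Fin.last n)
      exact absurd this hclast.ne'
    have : Kmat x y = Kmat (Function.update x (Fin.last n) (x (Fin.last n))) y := by
      rw [Function.update_eq_self]
    rw [this, hdet]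
    exact hgoal

/-- interior embedding -/
def Eint (n : ℕ) : Fin n → Fin (n + 2) := fun i => Fin.castSucc (Fin.succ i)

lemma Eint_strictMono (n : ℕ) : StrictMono (Eint n) :=
  Fin.strictMono_castSucc.comp Fin.strictMono_succ

/-- equiv sending `inl i ↦ i.succ`, `inr ↦ 0` -/
def Ezero (n : ℕ) : Fin n ⊕ Unit ≃ Fin (n + 1) where
  toFun := Sum.elim Fin.succ (fun _ => 0)
  invFun := fun i => Fin.cases (Sum.inr ()) Sum.inl i
  left_inv := by rintro (i | u) <;> simp
  right_inv := by
    intro i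
    cases i using Fin.cases <;> simp

/-- equiv sending `inl i ↦ i.castSucc`, `inr ↦ last` -/
def Elast (n : ℕ) : Fin n ⊕ Unit ≃ Fin (n + 1) where
  toFun := Sum.elim Fin.castSucc (fun _ => Fin.last n)
  invFun := fun i => Fin.lastCases (Sum.inr ()) Sum.inl i
  left_inv := by rintro (i | u) <;> simp
  right_inv := by
    intro i
    cases i using Fin.lastCases <;> simp

/-- the big equiv `Fin n ⊕ Fin 2 ≃ Fin (n+2)`, `inl i ↦ interior`, `inr 0 ↦ 0`, `inr 1 ↦ last` -/
def Ebig (n : ℕ) : Fin n ⊕ Fin 2 ≃ Fin (n + 2) where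
  toFun := Sum.elim (Eint n) ![0, Fin.last (n + 1)]
  invFun := fun i => if h1 : i = 0 then Sum.inr 0 else if h2 : i = Fin.last (n + 1) then Sum.inr 1
    else Sum.inl ⟨i.val - 1, by
      have := i.isLt
      simp only [Fin.ext_iff, Fin.val_zero, Fin.val_last] at h1 h2
      omega⟩
  left_inv := by
    rintro (i | b)
    · have h1 : Eint n i ≠ 0 := by
        simp [Eint, Fin.ext_iff]
      have h2 : Eint n i ≠ Fin.last (n + 1) := (Fin.castSucc_lt_last _).ne
      simp only [Sum.elim_inl]
      refine (dif_neg h1).trans ((dif_neg h2).trans ?_)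
      congr 1
    · have hlast0 : (Fin.last (n + 1) : Fin (n + 2)) ≠ 0 := by simp [Fin.ext_iff]
      fin_cases b <;> simp [hlast0, Fin.ext_iff]
  right_inv := by
    intro i
    by_cases h1 : i = 0
    · simp [h1]
    · by_cases h2 : i = Fin.last (n + 1)
      · simp [h1, h2]
      · show Sum.elim (Eint n) ![0, Fin.last (n + 1)]
            (if h1 : i = 0 then Sum.inr 0 else if h2 : i = Fin.last (n + 1) then Sum.inr 1
              else Sum.inl ⟨i.val - 1, by
                have := i.isLt
                simp only [Fin.ext_iff, Fin.val_zero, Fin.val_last] at h1 h2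
                omega⟩) = i
        rw [dif_neg h1, dif_neg h2]
        simp only [Sum.elim_inl]
        apply Fin.ext
        simp only [Eint, Fin.coe_castSucc, Fin.val_succ]
        have := i.isLt
        simp only [Fin.ext_iff, Fin.val_zero, Fin.val_last] at h1 h2
        omega

lemma det_border_entry {n : ℕ} (M : Matrix (Fin n) (Fin n) ℝ) [Invertible M]
    (B : Matrix (Fin n) (Fin 2) ℝ) (C : Matrix (Fin 2) (Fin n) ℝ)
    (D : Matrix (Fin 2) (Fin 2) ℝ) (α β : Fin 2) :
    (Matrix.fromBlocks M (Matrix.of fun i (_ : Unit) => B i β)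
        (Matrix.of fun (_ : Unit) j => C α j) (Matrix.of fun (_ : Unit) (_ : Unit) => D α β)).det
      = M.det * ((D - C * ⅟M * B) α β) := by
  rw [Matrix.det_fromBlocks₁₁]
  congr 1
  rw [Matrix.det_unique]
  simp only [Matrix.sub_apply, Matrix.mul_apply, Matrix.of_apply]

lemma detK_le_corner : ∀ (n : ℕ) (x y : Fin (n + 1) → ℝ), StrictMono x → StrictMono y →
    (Kmat x y).det ≤ Real.exp (x (Fin.last n) * y (Fin.last n)) *
      (Kmat (x ∘ Fin.castSucc) (y ∘ Fin.castSucc)).det := by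
  intro n
  induction n with
  | zero =>
    intro x y _ _
    have h1 : (Kmat x y).det = Real.exp (x 0 * y 0) := Matrix.det_fin_one _
    have h2 : (Kmat (x ∘ Fin.castSucc) (y ∘ Fin.castSucc)).det = 1 := Matrix.det_fin_zero
    rw [h1, h2, mul_one]
    exact le_of_eq (by norm_num [Fin.last])
  | succ n IH =>
    intro x y hx hy
    set A : Matrix (Fin (n + 2)) (Fin (n + 2)) ℝ := Kmat x y with hA
    set M : Matrix (Fin n) (Fin n) ℝ := Kmat (x ∘ Eint n) (y ∘ Eint n) with hM
    have hMpos : 0 < M.det :=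
      detK_pos n _ _ (hx.comp (Eint_strictMono n)) (hy.comp (Eint_strictMono n))
    haveI : Invertible M := M.invertibleOfIsUnitDet (isUnit_iff_ne_zero.mpr hMpos.ne')
    set cv : Fin 2 → Fin (n + 2) := ![0, Fin.last (n + 1)] with hcv
    set B2 : Matrix (Fin n) (Fin 2) ℝ := Matrix.of fun i β => A (Eint n i) (cv β) with hB2
    set C2 : Matrix (Fin 2) (Fin n) ℝ := Matrix.of fun α j => A (cv α) (Eint n j) with hC2
    set D2 : Matrix (Fin 2) (Fin 2) ℝ := Matrix.of fun α β => A (cv α) (cv β) with hD2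
    set S : Matrix (Fin 2) (Fin 2) ℝ := D2 - C2 * ⅟M * B2 with hS
    have hcv0 : cv 0 = 0 := rfl
    have hcv1 : cv 1 = Fin.last (n + 1) := rfl
    -- (1) det A = det M * det S
    have h1 : A.det = M.det * S.det := by
      have hsub : A.submatrix (Ebig n) (Ebig n) = Matrix.fromBlocks M B2 C2 D2 := by
        ext a b
        rcases a with a | a <;> rcases b with b | b <;> rfl
      rw [← Matrix.det_submatrix_equiv_self (Ebig n) A, hsub, Matrix.det_fromBlocks₁₁]
    -- (2) the (castSucc, castSucc) minor
    have h2 : (A.submatrix Fin.castSucc Fin.castSucc).det = M.det * S 0 0 := by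
      have hsub : (A.submatrix Fin.castSucc Fin.castSucc).submatrix (Ezero n) (Ezero n)
          = Matrix.fromBlocks M (Matrix.of fun i (_ : Unit) => B2 i 0)
            (Matrix.of fun (_ : Unit) j => C2 0 j) (Matrix.of fun (_ : Unit) (_ : Unit) => D2 0 0) := by
        ext a b
        rcases a with a | a <;> rcases b with b | b <;> rfl
      rw [← Matrix.det_submatrix_equiv_self (Ezero n) (A.submatrix Fin.castSucc Fin.castSucc),
        hsub, det_border_entry]
    -- (3) the (succ, succ) minor
    have h3 : (A.submatrix Fin.succ Fin.succ).det = M.det * S 1 1 := by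
      have hsub : (A.submatrix Fin.succ Fin.succ).submatrix (Elast n) (Elast n)
          = Matrix.fromBlocks M (Matrix.of fun i (_ : Unit) => B2 i 1)
            (Matrix.of fun (_ : Unit) j => C2 1 j) (Matrix.of fun (_ : Unit) (_ : Unit) => D2 1 1) := by
        ext a b
        rcases a with a | a <;> rcases b with b | b <;>
          (try rfl) <;>
          simp [Elast, Eint, Fin.succ_castSucc, Fin.succ_last, hB2, hC2, hD2, hcv1, hM, hA, Kmat]
      rw [← Matrix.det_submatrix_equiv_self (Elast n) (A.submatrix Fin.succ Fin.succ),
        hsub, det_border_entry]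
    -- permutation relating the two equivs
    set σ : Equiv.Perm (Fin (n+1)) := (Elast n).symm.trans (Ezero n) with hσ
    -- (4) the (castSucc, succ) minor
    have h4 : (A.submatrix Fin.castSucc Fin.succ).det
        = (Equiv.Perm.sign σ : ℝ) * (M.det * S 0 1) := by
      set Bod : Matrix (Fin (n+1)) (Fin (n+1)) ℝ :=
        (Matrix.fromBlocks M (Matrix.of fun i (_ : Unit) => B2 i 1)
          (Matrix.of fun (_ : Unit) j => C2 0 j)
          (Matrix.of fun (_ : Unit) (_ : Unit) => D2 0 1)).submatrix
            (Ezero n).symm (Ezero n).symm with hBod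
      have hsub : A.submatrix Fin.castSucc Fin.succ = Bod.submatrix id σ := by
        ext a b
        obtain ⟨a', rfl⟩ := (Ezero n).surjective a
        obtain ⟨b', rfl⟩ := (Elast n).surjective b
        rcases a' with a' | a' <;> rcases b' with b' | b' <;>
          simp only [hBod, hσ, Matrix.submatrix_apply, id_eq, Equiv.trans_apply,
            Equiv.symm_apply_apply, Matrix.fromBlocks_apply₁₁, Matrix.fromBlocks_apply₁₂,
            Matrix.fromBlocks_apply₂₁, Matrix.fromBlocks_apply₂₂] <;>
          (try rfl) <;>
          simp [Ezero, Elast, Eint, Fin.succ_castSucc, Fin.succ_last, hB2, hC2, hD2,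
            hcv0, hcv1, hM, hA, Kmat]
      rw [hsub, Matrix.det_permute' σ Bod, hBod,
        Matrix.det_submatrix_equiv_self, det_border_entry]
    -- (5) the (succ, castSucc) minor
    have h5 : (A.submatrix Fin.succ Fin.castSucc).det
        = (Equiv.Perm.sign σ : ℝ) * (M.det * S 1 0) := by
      set Bod : Matrix (Fin (n+1)) (Fin (n+1)) ℝ :=
        (Matrix.fromBlocks M (Matrix.of fun i (_ : Unit) => B2 i 0)
          (Matrix.of fun (_ : Unit) j => C2 1 j)
          (Matrix.of fun (_ : Unit) (_ : Unit) => D2 1 0)).submatrix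
            (Ezero n).symm (Ezero n).symm with hBod
      have hsub : A.submatrix Fin.succ Fin.castSucc = Bod.submatrix σ id := by
        ext a b
        obtain ⟨a', rfl⟩ := (Elast n).surjective a
        obtain ⟨b', rfl⟩ := (Ezero n).surjective b
        rcases a' with a' | a' <;> rcases b' with b' | b' <;>
          simp only [hBod, hσ, Matrix.submatrix_apply, id_eq, Equiv.trans_apply,
            Equiv.symm_apply_apply, Matrix.fromBlocks_apply₁₁, Matrix.fromBlocks_apply₁₂,
            Matrix.fromBlocks_apply₂₁, Matrix.fromBlocks_apply₂₂] <;>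
          (try rfl) <;>
          simp [Ezero, Elast, Eint, Fin.succ_castSucc, Fin.succ_last, hB2, hC2, hD2,
            hcv0, hcv1, hM, hA, Kmat]
      rw [hsub, Matrix.det_permute σ Bod, hBod,
        Matrix.det_submatrix_equiv_self, det_border_entry]
    -- positivity of the four minors
    have hcs : A.submatrix Fin.castSucc Fin.succ = Kmat (x ∘ Fin.castSucc) (y ∘ Fin.succ) := rfl
    have hsc : A.submatrix Fin.succ Fin.castSucc = Kmat (x ∘ Fin.succ) (y ∘ Fin.castSucc) := rfl
    have h00 : A.submatrix Fin.succ Fin.succ = Kmat (x ∘ Fin.succ) (y ∘ Fin.succ) := rfl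
    have htt : A.submatrix Fin.castSucc Fin.castSucc
        = Kmat (x ∘ Fin.castSucc) (y ∘ Fin.castSucc) := rfl
    have hcspos : 0 < (A.submatrix Fin.castSucc Fin.succ).det := by
      rw [hcs]; exact detK_pos _ _ _ (hx.comp Fin.strictMono_castSucc) (hy.comp Fin.strictMono_succ)
    have hscpos : 0 < (A.submatrix Fin.succ Fin.castSucc).det := by
      rw [hsc]; exact detK_pos _ _ _ (hx.comp Fin.strictMono_succ) (hy.comp Fin.strictMono_castSucc)
    have httpos : 0 < (A.submatrix Fin.castSucc Fin.castSucc).det := by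
      rw [htt]
      exact detK_pos _ _ _ (hx.comp Fin.strictMono_castSucc) (hy.comp Fin.strictMono_castSucc)
    -- sign squared is one
    have hsq : (Equiv.Perm.sign σ : ℝ) * (Equiv.Perm.sign σ : ℝ) = 1 := by
      rcases Int.units_eq_one_or (Equiv.Perm.sign σ) with h | h <;> rw [h] <;> norm_num
    -- S 0 1 * S 1 0 ≥ 0
    have hprod : 0 < S 0 1 * S 1 0 := by
      have hmul : (A.submatrix Fin.castSucc Fin.succ).det * (A.submatrix Fin.succ Fin.castSucc).det
          = M.det * M.det * (S 0 1 * S 1 0) := by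
        rw [h4, h5]
        calc (Equiv.Perm.sign σ : ℝ) * (M.det * S 0 1) * ((Equiv.Perm.sign σ : ℝ) * (M.det * S 1 0))
            = ((Equiv.Perm.sign σ : ℝ) * (Equiv.Perm.sign σ : ℝ)) *
              (M.det * M.det * (S 0 1 * S 1 0)) := by ring
          _ = M.det * M.det * (S 0 1 * S 1 0) := by rw [hsq, one_mul]
      nlinarith [mul_pos hcspos hscpos]
    -- IH gives S 1 1 ≤ exp (x last * y last)
    have hS11 : S 1 1 ≤ Real.exp (x (Fin.last (n+1)) * y (Fin.last (n+1))) := by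
      have hIH := IH (x ∘ Fin.succ) (y ∘ Fin.succ) (hx.comp Fin.strictMono_succ)
        (hy.comp Fin.strictMono_succ)
      have e1 : Kmat ((x ∘ Fin.succ) ∘ Fin.castSucc) ((y ∘ Fin.succ) ∘ Fin.castSucc) = M := by
        rw [hM]
        congr 1 <;> funext i <;> simp [Eint, Function.comp, Fin.succ_castSucc]
      have e2 : (x ∘ Fin.succ) (Fin.last n) = x (Fin.last (n+1)) := by
        simp [Function.comp, Fin.succ_last]
      have e3 : (y ∘ Fin.succ) (Fin.last n) = y (Fin.last (n+1)) := by
        simp [Function.comp, Fin.succ_last]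
      rw [e1, e2, e3, ← h00] at hIH
      rw [h3] at hIH
      have hIH' : M.det * S 1 1 ≤ M.det * Real.exp (x (Fin.last (n+1)) * y (Fin.last (n+1))) := by
        linarith
      exact (mul_le_mul_iff_right₀ hMpos).mp hIH'
    -- final computation
    rw [← htt]
    have hdetS : S.det = S 0 0 * S 1 1 - S 0 1 * S 1 0 := Matrix.det_fin_two S
    have hS00 : M.det * S 0 0 = (A.submatrix Fin.castSucc Fin.castSucc).det := h2.symm
    calc A.det = M.det * (S 0 0 * S 1 1 - S 0 1 * S 1 0) := by rw [h1, hdetS]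
      _ ≤ M.det * (S 0 0 * S 1 1) := by nlinarith
      _ = (A.submatrix Fin.castSucc Fin.castSucc).det * S 1 1 := by rw [← hS00]; ring
      _ ≤ (A.submatrix Fin.castSucc Fin.castSucc).det *
            Real.exp (x (Fin.last (n+1)) * y (Fin.last (n+1))) := by
          exact mul_le_mul_of_nonneg_left hS11 httpos.le
      _ = Real.exp (x (Fin.last (n+1)) * y (Fin.last (n+1))) *
            (A.submatrix Fin.castSucc Fin.castSucc).det := by ring

lemma detK_le_prod : ∀ (n : ℕ) (x y : Fin n → ℝ), StrictMono x → StrictMono y →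
    (Kmat x y).det ≤ ∏ i, Real.exp (x i * y i) := by
  intro n
  induction n with
  | zero => intro x y _ _; simp [Matrix.det_isEmpty]
  | succ n IH =>
    intro x y hx hy
    calc (Kmat x y).det ≤ Real.exp (x (Fin.last n) * y (Fin.last n)) *
          (Kmat (x ∘ Fin.castSucc) (y ∘ Fin.castSucc)).det := detK_le_corner n x y hx hy
      _ ≤ Real.exp (x (Fin.last n) * y (Fin.last n)) *
          ∏ i : Fin n, Real.exp ((x ∘ Fin.castSucc) i * (y ∘ Fin.castSucc) i) := by
        apply mul_le_mul_of_nonneg_left _ (Real.exp_pos _).le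
        exact IH _ _ (hx.comp Fin.strictMono_castSucc) (hy.comp Fin.strictMono_castSucc)
      _ = ∏ i : Fin (n + 1), Real.exp (x i * y i) := by
        rw [Fin.prod_univ_castSucc, mul_comm]
        rfl

/-- The one-dimensional heat kernel `p_t(a,b)`. -/
noncomputable def heatK (t a b : ℝ) : ℝ :=
    (Real.sqrt (2 * Real.pi * t))⁻¹ * Real.exp (-(a - b) ^ 2 / (2 * t))

theorem det_heat_kernel_upper_bound (k : ℕ) (x y : Fin (k + 1) → ℝ)
    (hx : StrictMono x) (hy : StrictMono y) :
    Matrix.det (Matrix.of fun i j : Fin (k + 1) => heatK 1 (x i) (y j)) ≤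
        ∏ i : Fin (k + 1), (Real.sqrt (2 * Real.pi))⁻¹ * Real.exp (-(x i - y i) ^ 2 / 2) ∧
      Matrix.det (Matrix.of fun i j : Fin (k + 1) => heatK 1 (x i) (y j)) ≤ 1 := by
  set c : Fin (k + 1) → ℝ := fun i => (Real.sqrt (2 * Real.pi))⁻¹ * Real.exp (-(x i) ^ 2 / 2)
    with hc
  set d : Fin (k + 1) → ℝ := fun j => Real.exp (-(y j) ^ 2 / 2) with hd
  have hsqrt : Real.sqrt (2 * Real.pi * 1) = Real.sqrt (2 * Real.pi) := by rw [mul_one]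
  have hfac : ∀ i j, heatK 1 (x i) (y j) = d j * (c i * Real.exp (x i * y j)) := by
    intro i j
    rw [heatK, hsqrt, hc, hd]
    simp only
    rw [show Real.exp (-(x i - y j) ^ 2 / (2 * 1))
        = Real.exp (-(y j) ^ 2 / 2) * (Real.exp (-(x i) ^ 2 / 2) * Real.exp (x i * y j)) from by
      rw [← Real.exp_add, ← Real.exp_add]; congr 1; ring]
    ring
  have hdet1 : Matrix.det (Matrix.of fun i j : Fin (k + 1) => heatK 1 (x i) (y j))
      = (∏ j, d j) * ((∏ i, c i) * (Kmat x y).det) := by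
    have e1 : (Matrix.of fun i j : Fin (k + 1) => heatK 1 (x i) (y j))
        = Matrix.of fun i j => d j * ((Matrix.of fun i j => c i * Real.exp (x i * y j)) i j) := by
      ext i j
      rw [Matrix.of_apply, Matrix.of_apply, hfac, Matrix.of_apply]
    rw [e1, Matrix.det_mul_row]
    congr 1
    have e2 : (Matrix.of fun i j : Fin (k+1) => c i * Real.exp (x i * y j))
        = Matrix.of fun i j => c i * (Kmat x y) i j := rfl
    rw [e2, Matrix.det_mul_column]
  have hcd_pos : ∀ i, 0 < c i ∧ 0 < d i := by
    intro i
    constructor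
    · apply mul_pos (inv_pos.mpr _) (Real.exp_pos _)
      apply Real.sqrt_pos.mpr
      positivity
    · exact Real.exp_pos _
  have hbound1 : Matrix.det (Matrix.of fun i j : Fin (k + 1) => heatK 1 (x i) (y j)) ≤
      ∏ i : Fin (k + 1), (Real.sqrt (2 * Real.pi))⁻¹ * Real.exp (-(x i - y i) ^ 2 / 2) := by
    rw [hdet1]
    have hK := detK_le_prod (k + 1) x y hx hy
    calc (∏ j, d j) * ((∏ i, c i) * (Kmat x y).det)
        ≤ (∏ j, d j) * ((∏ i, c i) * ∏ i, Real.exp (x i * y i)) := by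
          apply mul_le_mul_of_nonneg_left _ (Finset.prod_pos (fun j _ => (hcd_pos j).2)).le
          exact mul_le_mul_of_nonneg_left hK (Finset.prod_pos (fun i _ => (hcd_pos i).1)).le
      _ = ∏ i : Fin (k + 1), (Real.sqrt (2 * Real.pi))⁻¹ * Real.exp (-(x i - y i) ^ 2 / 2) := by
          rw [← Finset.prod_mul_distrib, ← Finset.prod_mul_distrib]
          apply Finset.prod_congr rfl
          intro i _
          rw [hc, hd]
          simp only
          rw [show Real.exp (-(x i - y i) ^ 2 / 2)
              = Real.exp (-(y i) ^ 2 / 2) * (Real.exp (-(x i) ^ 2 / 2) * Real.exp (x i * y i)) from by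
            rw [← Real.exp_add, ← Real.exp_add]; congr 1; ring]
          ring
  refine ⟨hbound1, hbound1.trans ?_⟩
  apply Finset.prod_le_one
  · intro i _
    positivity
  · intro i _
    have h1 : Real.exp (-(x i - y i) ^ 2 / 2) ≤ 1 := by
      rw [Real.exp_le_one_iff]
      nlinarith [sq_nonneg (x i - y i)]
    have h2 : (Real.sqrt (2 * Real.pi))⁻¹ ≤ 1 := by
      rw [inv_le_one_iff₀]
      right
      rw [show (1:ℝ) = Real.sqrt 1 from (Real.sqrt_one).symm]
      apply Real.sqrt_le_sqrt
      nlinarith [Real.pi_gt_three]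
    calc (Real.sqrt (2 * Real.pi))⁻¹ * Real.exp (-(x i - y i) ^ 2 / 2)
        ≤ 1 * 1 := mul_le_mul h2 h1 (Real.exp_pos _).le zero_le_one
      _ = 1 := mul_one 1
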